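/- arXiv:1411.6719 — 7 statements merged into one kernel-verified Lean document; each statement's English description precedes it below -/
import Mathlib

section
/- Let (Ω, F) be a measurable space, let P and Q be probability measures on it with P absolutely continuous with respect to Q, and let Λ = dP/dQ denote the Radon–Nikodym derivative of P with respect to Q. Let m ⊆ F be a sub-σ-algebra and let X : Ω → ℝ be P-integrable. Then the Q-conditional expectation E_Q[Λ | m] is strictly positive P-almost everywhere, and E_P[X | m] = E_Q[X·Λ | m] / E_Q[Λ | m] holds P-almost everywhere. -/
open MeasureTheory

/-- **Abstract conditional Bayes formula (change of measure for conditional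
expectations).** If `P ≪ Q` are probability measures with Radon–Nikodym derivative
`Λ = dP/dQ`, `m` is a sub-σ-algebra and `X` is `P`-integrable, then `E_Q[Λ | m] > 0`
`P`-a.e. and `E_P[X | m] = E_Q[X·Λ | m] / E_Q[Λ | m]` `P`-a.e. -/
theorem stmt_0 {Ω : Type*} {F : MeasurableSpace Ω} (P Q : Measure Ω)
    [IsProbabilityMeasure P] [IsProbabilityMeasure Q] (hPQ : P ≪ Q)
    (m : MeasurableSpace Ω) (hm : m ≤ F) (X : Ω → ℝ) (hX : Integrable X P) :
    (∀ᵐ ω ∂P, 0 < (Q[fun ω' => (P.rnDeriv Q ω').toReal | m]) ω) ∧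
      (P[X | m]) =ᵐ[P]
        fun ω =>
          (Q[fun ω' => X ω' * (P.rnDeriv Q ω').toReal | m]) ω /
            (Q[fun ω' => (P.rnDeriv Q ω').toReal | m]) ω := by
  letI : MeasurableSpace Ω := F
  haveI : IsFiniteMeasure (Q.trim hm) := isFiniteMeasure_trim hm
  haveI : IsFiniteMeasure (P.trim hm) := isFiniteMeasure_trim hm
  set Λ : Ω → ℝ := fun ω => (P.rnDeriv Q ω).toReal with hΛ
  set g : Ω → ℝ := Q[Λ | m] with hg
  have hΛ_int : Integrable Λ Q := Measure.integrable_toReal_rnDeriv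
  have hΛ_nonneg : 0 ≤ᵐ[Q] Λ := Filter.Eventually.of_forall fun ω => ENNReal.toReal_nonneg
  have hg_nonneg : 0 ≤ᵐ[Q] g := condExp_nonneg hΛ_nonneg
  have hg_meas : StronglyMeasurable[m] g := stronglyMeasurable_condExp
  -- the set where g ≤ 0 is m-measurable and P-null
  have hA : MeasurableSet[m] {ω | g ω ≤ 0} :=
    (hg_meas.measurable measurableSet_Iic : MeasurableSet[m] (g ⁻¹' Set.Iic 0))
  have hPA : P {ω | g ω ≤ 0} = 0 := by
    have h1 : ∫ ω in {ω | g ω ≤ 0}, Λ ω ∂Q = (P {ω | g ω ≤ 0}).toReal :=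
      Measure.setIntegral_toReal_rnDeriv hPQ _
    have h2 : ∫ ω in {ω | g ω ≤ 0}, g ω ∂Q = ∫ ω in {ω | g ω ≤ 0}, Λ ω ∂Q :=
      setIntegral_condExp hm hΛ_int hA
    have h3 : ∫ ω in {ω | g ω ≤ 0}, g ω ∂Q ≤ 0 := by
      exact setIntegral_nonpos (hm _ hA) fun ω hω => hω
    have h4 : (P {ω | g ω ≤ 0}).toReal ≤ 0 := by rw [← h1, ← h2]; exact h3
    have h5 : (P {ω | g ω ≤ 0}).toReal = 0 := le_antisymm h4 ENNReal.toReal_nonneg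
    exact (ENNReal.toReal_eq_zero_iff _).mp h5 |>.resolve_right (measure_ne_top P _)
  have hg_pos : ∀ᵐ ω ∂P, 0 < g ω := by
    rw [ae_iff]
    refine measure_mono_null (fun ω hω => ?_) hPA
    simpa using not_lt.mp hω
  refine ⟨hg_pos, ?_⟩
  -- key identity: Q[X·Λ | m] = P[X|m] · g  Q-a.e.
  have hXΛ_int : Integrable (fun ω => X ω * Λ ω) Q := by
    have := (integrable_rnDeriv_smul_iff (f := X) hPQ).mpr hX
    simpa [smul_eq_mul, mul_comm] using this
  have hcond_int : Integrable (P[X | m]) P := integrable_condExp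
  have hcΛ_int : Integrable (fun ω => (P[X | m]) ω * Λ ω) Q := by
    have := (integrable_rnDeriv_smul_iff (f := P[X | m]) hPQ).mpr hcond_int
    simpa [smul_eq_mul, mul_comm] using this
  have hkey : (fun ω => (Q[fun ω' => X ω' * Λ ω' | m]) ω) =ᵐ[Q]
      Q[fun ω => (P[X | m]) ω * Λ ω | m] := by
    refine ae_eq_condExp_of_forall_setIntegral_eq hm hXΛ_int
      (fun s _ _ => integrable_condExp.integrableOn) (fun s hs _ => ?_)
      stronglyMeasurable_condExp.aestronglyMeasurable |>.symm
    rw [setIntegral_condExp hm hcΛ_int hs]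
    have e1 : ∫ ω in s, (P[X | m]) ω * Λ ω ∂Q = ∫ ω in s, (P[X | m]) ω ∂P := by
      have := setIntegral_rnDeriv_smul (f := P[X | m]) hPQ (hm s hs)
      simpa [smul_eq_mul, mul_comm] using this
    have e2 : ∫ ω in s, X ω * Λ ω ∂Q = ∫ ω in s, X ω ∂P := by
      have := setIntegral_rnDeriv_smul (f := X) hPQ (hm s hs)
      simpa [smul_eq_mul, mul_comm] using this
    rw [e1, e2, setIntegral_condExp hm hX hs]
  have hpull : Q[fun ω => (P[X | m]) ω * Λ ω | m] =ᵐ[Q] fun ω => (P[X | m]) ω * g ω := by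
    have hmX : StronglyMeasurable[m] (P[X | m]) := stronglyMeasurable_condExp
    have := condExp_mul_of_stronglyMeasurable_left hmX
      hcΛ_int hΛ_int
    exact this
  have hQeq : (fun ω => (Q[fun ω' => X ω' * Λ ω' | m]) ω) =ᵐ[Q]
      fun ω => (P[X | m]) ω * g ω := hkey.trans hpull
  have hPeq : (fun ω => (Q[fun ω' => X ω' * Λ ω' | m]) ω) =ᵐ[P]
      fun ω => (P[X | m]) ω * g ω := hQeq.filter_mono hPQ.ae_le
  filter_upwards [hPeq, hg_pos] with ω heq hpos
  rw [eq_div_iff (ne_of_gt hpos)]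
  exact heq.symm
end

section
/- Let N ≥ 1 and let A be a real symmetric positive semidefinite N×N matrix all of whose eigenvalues are at least 1 (equivalently, A − I is positive semidefinite). Then the adjugate matrix of A satisfies ‖adj(A)‖_F ≤ √N · det(A). -/
/-- The Frobenius norm of a real `N × N` matrix: `‖A‖_F = sqrt (∑ i j, A i j ^ 2)`. -/
noncomputable def frobNorm {N : ℕ} (A : Matrix (Fin N) (Fin N) ℝ) : ℝ :=
  Real.sqrt (∑ i, ∑ j, A i j ^ 2)

open Matrix Finset in
/-- If `A` is a real symmetric positive semidefinite `N × N` matrix all of whose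
eigenvalues are at least `1` (equivalently, `A − I` is positive semidefinite), then
`‖adj(A)‖_F ≤ √N · det A`. -/
theorem stmt_8 {N : ℕ} (hN : 1 ≤ N) (A : Matrix (Fin N) (Fin N) ℝ)
    (hA : A.PosSemidef) (hA1 : (A - 1).PosSemidef) :
    frobNorm A.adjugate ≤ Real.sqrt N * A.det := by
  classical
  have hH := hA.1
  set lam : Fin N → ℝ := hH.eigenvalues with hlam
  set U : Matrix (Fin N) (Fin N) ℝ := (hH.eigenvectorUnitary : Matrix (Fin N) (Fin N) ℝ) with hUdef
  have hUU : star U * U = 1 := Unitary.coe_star_mul_self _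
  have hUU' : U * star U = 1 := Unitary.coe_mul_star_self _
  -- eigenvalues are at least 1
  have heig : ∀ i, 1 ≤ lam i := by
    intro i
    set v : Fin N → ℝ := ⇑(hH.eigenvectorBasis i) with hvdef
    have hv := hA1.dotProduct_mulVec_nonneg v
    have hmv : A *ᵥ v = lam i • v := hH.mulVec_eigenvectorBasis i
    have hnorm : dotProduct v v = 1 := by
      have h1 : ‖hH.eigenvectorBasis i‖ = 1 := hH.eigenvectorBasis.orthonormal.1 i
      have h2 := real_inner_self_eq_norm_sq (hH.eigenvectorBasis i)
      rw [h1, one_pow] at h2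
      rw [← h2]; rfl
    rw [sub_mulVec, one_mulVec, hmv] at hv
    simp only [star_trivial, dotProduct_sub, dotProduct_smul, smul_eq_mul, hnorm] at hv
    linarith
  have heig0 : ∀ i, 0 ≤ lam i := fun i => le_trans zero_le_one (heig i)
  -- spectral theorem over ℝ
  have hspec : A = U * diagonal lam * star U := by
    have h := hH.spectral_theorem
    simpa using h
  set d : Fin N → ℝ := fun i => ∏ j ∈ univ.erase i, lam j with hd
  -- adjugates of unitaries
  have hadjU : adjugate U = U.det • star U := by
    calc adjugate U = star U * (U * adjugate U) := by rw [← mul_assoc, hUU, one_mul]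
      _ = U.det • star U := by rw [mul_adjugate, Matrix.mul_smul, mul_one]
  have hadjUs : adjugate (star U) = (star U).det • U := by
    calc adjugate (star U) = U * (star U * adjugate (star U)) := by
          rw [← mul_assoc, hUU', one_mul]
      _ = (star U).det • U := by rw [mul_adjugate, Matrix.mul_smul, mul_one]
  have hdet1 : (star U).det * U.det = 1 := by rw [← det_mul, hUU, det_one]
  -- adjugate of A
  have hadj : A.adjugate = U * diagonal d * star U := by
    rw [hspec, adjugate_mul_distrib, adjugate_mul_distrib, adjugate_diagonal, hadjU, hadjUs]
    rw [Matrix.smul_mul, Matrix.mul_smul, Matrix.mul_smul, smul_smul, hdet1, one_smul,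
      mul_assoc]
  -- Frobenius norm squared equals sum of squared "adjugate eigenvalues"
  have hsym : A.adjugateᵀ = A.adjugate := by
    rw [adjugate_transpose, show Aᵀ = A from hH]
  have hsumeq : ∑ i, ∑ j, A.adjugate i j ^ 2 = ∑ i, d i ^ 2 := by
    have h1 : ∑ i, ∑ j, A.adjugate i j ^ 2 = (A.adjugateᵀ * A.adjugate).trace := by
      simp only [Matrix.trace, Matrix.diag, Matrix.mul_apply, Matrix.transpose_apply, sq]
      rw [Finset.sum_comm]
    rw [h1, hsym, hadj]
    have h2 : U * diagonal d * star U * (U * diagonal d * star U)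
        = U * (diagonal d * diagonal d) * star U := by
      simp only [mul_assoc]
      rw [← mul_assoc (star U) U, hUU, one_mul]
    rw [h2, Matrix.trace_mul_comm, ← mul_assoc, hUU, one_mul, diagonal_mul_diagonal,
      trace_diagonal]
    simp [sq]
  -- determinant and bounds
  have hdet : A.det = ∏ i, lam i := by
    have := hH.det_eq_prod_eigenvalues
    simpa using this
  have hd0 : ∀ i, 0 ≤ d i := fun i => Finset.prod_nonneg fun j _ => heig0 j
  have hdle : ∀ i, d i ≤ A.det := by
    intro i
    rw [hdet, ← Finset.mul_prod_erase univ lam (mem_univ i)]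
    exact le_mul_of_one_le_left (hd0 i) (heig i)
  have hdet0 : 0 ≤ A.det := by
    rw [hdet]; exact Finset.prod_nonneg fun j _ => heig0 j
  -- conclude
  rw [frobNorm, hsumeq]
  have hsumle : ∑ i, d i ^ 2 ≤ (N : ℝ) * A.det ^ 2 := by
    calc ∑ i, d i ^ 2 ≤ ∑ _i : Fin N, A.det ^ 2 :=
          Finset.sum_le_sum fun i _ => pow_le_pow_left₀ (hd0 i) (hdle i) 2
      _ = (N : ℝ) * A.det ^ 2 := by simp [Finset.sum_const, Finset.card_univ, mul_comm]
  calc Real.sqrt (∑ i, d i ^ 2) ≤ Real.sqrt ((N : ℝ) * A.det ^ 2) := Real.sqrt_le_sqrt hsumle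
    _ = Real.sqrt N * A.det := by
        rw [Real.sqrt_mul (by positivity), Real.sqrt_sq hdet0]
end

section
/- Let (Ω, F, P) be a probability space, let N ≥ 1 be a natural number, let t ∈ ℕ, and let C ≥ 1 be a real constant. Let Q_0, …, Q_t : Ω → ℝ be random variables (not necessarily independent) each of whose law is the chi-squared distribution with N degrees of freedom, i.e. the Gamma distribution with shape N/2 and rate 1/2. Then P( sup_{i ∈ {0,…,t}} Q_i < 5·C·N·(1 + log(t+1)) ) ≥ 1 − exp(−C·N) / (t+1)^{C·N − 1}. -/
open MeasureTheory ProbabilityTheory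

open Real Set
open scoped ENNReal NNReal


lemma gamma_mgf (a : ℝ) (ha : 0 < a) :
    ∫⁻ x, ENNReal.ofReal (Real.exp (3/8 * x)) ∂(gammaMeasure a (1/2)) =
      ENNReal.ofReal ((4:ℝ) ^ a) := by
  have hmeas : Measurable (gammaPDF a (1/2)) :=
    (measurable_gammaPDFReal a (1/2)).ennreal_ofReal
  rw [gammaMeasure, lintegral_withDensity_eq_lintegral_mul _ hmeas
    (by fun_prop : Measurable fun x : ℝ => ENNReal.ofReal (Real.exp (3/8 * x)))]
  have hpt : ∀ x : ℝ, (gammaPDF a (1/2) * fun x => ENNReal.ofReal (Real.exp (3/8 * x))) x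
      = ENNReal.ofReal ((4:ℝ) ^ a) * gammaPDF a (1/8) x := by
    intro x
    simp only [Pi.mul_apply]
    rcases lt_or_ge x 0 with hx | hx
    · rw [gammaPDF_of_neg hx, gammaPDF_of_neg hx]; simp
    · rw [gammaPDF_of_nonneg hx, gammaPDF_of_nonneg hx,
        ← ENNReal.ofReal_mul (by positivity), ← ENNReal.ofReal_mul (by positivity)]
      congr 1
      have h4 : (4:ℝ) ^ a * (1/8:ℝ) ^ a = (1/2:ℝ) ^ a := by
        rw [← Real.mul_rpow (by norm_num) (by norm_num)]; norm_num
      have hexp : Real.exp (-(1/2 * x)) * Real.exp (3/8 * x) = Real.exp (-(1/8 * x)) := by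
        rw [← Real.exp_add]; ring_nf
      calc (1/2:ℝ) ^ a / Real.Gamma a * x ^ (a-1) * Real.exp (-(1/2 * x)) * Real.exp (3/8 * x)
          = ((1/2:ℝ) ^ a) * (1 / Real.Gamma a * x ^ (a-1) * Real.exp (-(1/8 * x))) := by
            rw [mul_assoc ((1/2:ℝ)^a / Real.Gamma a * x ^ (a-1)), hexp]; ring
        _ = (4:ℝ) ^ a * ((1/8:ℝ) ^ a / Real.Gamma a * x ^ (a-1) * Real.exp (-(1/8 * x))) := by
            rw [← h4]; ring
  simp_rw [hpt]
  have hmeas2 : Measurable (gammaPDF a (1/8)) :=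
    (measurable_gammaPDFReal a (1/8)).ennreal_ofReal
  rw [lintegral_const_mul _ hmeas2,
    lintegral_gammaPDF_eq_one ha (by norm_num : (0:ℝ) < 1/8), mul_one]

lemma gamma_tail (a : ℝ) (ha : 0 < a) (B : ℝ) :
    gammaMeasure a (1/2) {x | B ≤ x} ≤
      ENNReal.ofReal ((4:ℝ) ^ a * Real.exp (-(3/8) * B)) := by
  set μ := gammaMeasure a (1/2)
  have h1 : ENNReal.ofReal (Real.exp (3/8 * B)) * μ {x | B ≤ x} ≤
      ENNReal.ofReal ((4:ℝ) ^ a) := by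
    rw [← gamma_mgf a ha]
    calc ENNReal.ofReal (Real.exp (3/8 * B)) * μ {x | B ≤ x}
        = ∫⁻ _ in {x | B ≤ x}, ENNReal.ofReal (Real.exp (3/8 * B)) ∂μ :=
          (setLIntegral_const _ _).symm
      _ ≤ ∫⁻ x in {x | B ≤ x}, ENNReal.ofReal (Real.exp (3/8 * x)) ∂μ := by
          refine setLIntegral_mono
            ((measurable_const.mul measurable_id').exp.ennreal_ofReal) fun x hx => ?_
          exact ENNReal.ofReal_le_ofReal (Real.exp_le_exp.2 (by
            simp only [mem_setOf_eq] at hx; linarith))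
      _ ≤ ∫⁻ x, ENNReal.ofReal (Real.exp (3/8 * x)) ∂μ := setLIntegral_le_lintegral _ _
  calc μ {x | B ≤ x}
      = ENNReal.ofReal (Real.exp (-(3/8) * B)) *
          (ENNReal.ofReal (Real.exp (3/8 * B)) * μ {x | B ≤ x}) := by
        rw [← mul_assoc, ← ENNReal.ofReal_mul (Real.exp_nonneg _), ← Real.exp_add]
        norm_num
    _ ≤ ENNReal.ofReal (Real.exp (-(3/8) * B)) * ENNReal.ofReal ((4:ℝ) ^ a) :=
        mul_le_mul_right h1 _
    _ = ENNReal.ofReal ((4:ℝ) ^ a * Real.exp (-(3/8) * B)) := by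
        rw [← ENNReal.ofReal_mul (Real.exp_nonneg _), mul_comm]


/-- **Core estimate of Lemma 8.** If `Q_0, …, Q_t` are (not necessarily independent)
random variables each distributed as chi-squared with `N` degrees of freedom (the Gamma
distribution with shape `N/2` and rate `1/2`), then for any `C ≥ 1`,
`P(sup_i Q_i < 5·C·N·(1 + log(t+1))) ≥ 1 − exp(−C·N)/(t+1)^{C·N − 1}`. -/
theorem stmt_9 {Ω : Type*} [MeasurableSpace Ω] (P : Measure Ω) [IsProbabilityMeasure P]
    (N : ℕ) (hN : 1 ≤ N) (t : ℕ) (C : ℝ) (hC : 1 ≤ C)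
    (Q : Fin (t + 1) → Ω → ℝ)
    (hQ : ∀ i, P.map (Q i) = gammaMeasure ((N : ℝ) / 2) (1 / 2)) :
    ENNReal.ofReal (1 - Real.exp (-(C * N)) / (t + 1 : ℝ) ^ (C * N - 1)) ≤
      P {ω | ∀ i, Q i ω < 5 * C * N * (1 + Real.log (t + 1))} := by
  have hN0 : (0:ℝ) < N := by exact_mod_cast hN
  have ha : (0:ℝ) < (N:ℝ)/2 := by positivity
  set B : ℝ := 5 * C * N * (1 + Real.log (t + 1)) with hB
  set A : Set Ω := {ω | ∀ i, Q i ω < B} with hA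
  -- each Q i is a.e.-measurable
  have haemeas : ∀ i, AEMeasurable (Q i) P := by
    intro i
    by_contra h
    have h0 := Measure.map_of_not_aemeasurable h
    rw [hQ i] at h0
    have : IsProbabilityMeasure (gammaMeasure ((N:ℝ)/2) (1/2)) :=
      isProbabilityMeasure_gammaMeasure ha (by norm_num)
    have := this.measure_univ
    rw [h0] at this
    simp at this
  -- per-variable tail bound
  have tail_i : ∀ i, P {ω | B ≤ Q i ω} ≤
      ENNReal.ofReal ((4:ℝ) ^ ((N:ℝ)/2) * Real.exp (-(3/8) * B)) := by
    intro i
    have hset : {ω | B ≤ Q i ω} = Q i ⁻¹' (Set.Ici B) := rfl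
    rw [hset, ← Measure.map_apply_of_aemeasurable (haemeas i) measurableSet_Ici, hQ i]
    exact gamma_tail _ ha B
  -- union bound on the complement
  have hsub : Aᶜ ⊆ ⋃ i, {ω | B ≤ Q i ω} := by
    intro ω hω
    simp only [hA, Set.mem_compl_iff, Set.mem_setOf_eq, not_forall, not_lt] at hω
    obtain ⟨i, hi⟩ := hω
    exact Set.mem_iUnion.2 ⟨i, hi⟩
  have hcompl : P Aᶜ ≤ (t + 1 : ℕ) *
      ENNReal.ofReal ((4:ℝ) ^ ((N:ℝ)/2) * Real.exp (-(3/8) * B)) := by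
    calc P Aᶜ ≤ P (⋃ i, {ω | B ≤ Q i ω}) := measure_mono hsub
      _ ≤ ∑ i, P {ω | B ≤ Q i ω} := measure_iUnion_fintype_le _ _
      _ ≤ ∑ _i : Fin (t+1), ENNReal.ofReal ((4:ℝ) ^ ((N:ℝ)/2) * Real.exp (-(3/8) * B)) :=
          Finset.sum_le_sum fun i _ => tail_i i
      _ = (t + 1 : ℕ) * ENNReal.ofReal ((4:ℝ) ^ ((N:ℝ)/2) * Real.exp (-(3/8) * B)) := by
          rw [Finset.sum_const, Finset.card_univ, Fintype.card_fin, nsmul_eq_mul]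
  -- the key real-number inequality
  have hT1 : (1:ℝ) ≤ (t:ℝ) + 1 := by have := Nat.cast_nonneg (α := ℝ) t; linarith
  have hT0 : (0:ℝ) < (t:ℝ) + 1 := by positivity
  have hL : 0 ≤ Real.log ((t:ℝ) + 1) := Real.log_nonneg hT1
  have hnum : ((t:ℝ) + 1) * ((4:ℝ) ^ ((N:ℝ)/2) * Real.exp (-(3/8) * B)) ≤
      Real.exp (-(C * N)) / ((t:ℝ) + 1) ^ (C * N - 1) := by
    set L : ℝ := Real.log ((t:ℝ) + 1) with hLdef
    have hT : ((t:ℝ) + 1) = Real.exp L := (Real.exp_log hT0).symm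
    have h4 : (4:ℝ) ^ ((N:ℝ)/2) = Real.exp (Real.log 4 * ((N:ℝ)/2)) := by
      rw [Real.rpow_def_of_pos (by norm_num)]
    have hlog4 : Real.log 4 = 2 * Real.log 2 := by
      rw [show (4:ℝ) = 2^2 by norm_num, Real.log_pow]; push_cast; ring
    have hrpow : ((t:ℝ) + 1) ^ (C * N - 1) = Real.exp (L * (C * N - 1)) := by
      rw [Real.rpow_def_of_pos hT0]
    rw [hrpow, h4, hT, ← Real.exp_add, ← Real.exp_add, ← Real.exp_sub, Real.exp_le_exp,
      hB, hlog4]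
    nlinarith [Real.log_two_lt_d9, mul_nonneg (mul_nonneg (zero_le_one.trans hC) hN0.le) hL,
      mul_le_mul_of_nonneg_right (mul_le_mul_of_nonneg_right hC hN0.le) hL]
  have hε : 0 ≤ Real.exp (-(C * N)) / ((t:ℝ) + 1) ^ (C * N - 1) := by positivity
  have hPc : P Aᶜ ≤ ENNReal.ofReal (Real.exp (-(C * N)) / ((t:ℝ) + 1) ^ (C * N - 1)) := by
    refine hcompl.trans ?_
    rw [← ENNReal.ofReal_natCast, ← ENNReal.ofReal_mul (by positivity)]
    refine ENNReal.ofReal_le_ofReal ?_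
    push_cast
    exact hnum
  have h1 : (1:ℝ≥0∞) ≤ P A + P Aᶜ := by
    rw [← measure_univ (μ := P), ← Set.union_compl_self A]
    exact measure_union_le _ _
  calc ENNReal.ofReal (1 - Real.exp (-(C * N)) / ((t:ℝ) + 1) ^ (C * N - 1))
      = 1 - ENNReal.ofReal (Real.exp (-(C * N)) / ((t:ℝ) + 1) ^ (C * N - 1)) := by
        rw [ENNReal.ofReal_sub _ hε, ENNReal.ofReal_one]
    _ ≤ 1 - P Aᶜ := tsub_le_tsub_left hPc 1
    _ ≤ P A := tsub_le_iff_right.2 h1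
end

section
/- Let (Ω, F, P) be a probability space, let −∞ < a < b < ∞, and let X : Ω → ℝ and X^n : Ω → ℝ (n ∈ ℕ) be measurable random variables all taking values in [a, b] almost surely. Suppose that for P-almost every ω ∈ Ω, the regular conditional distribution of X^n given X, evaluated at X(ω), converges weakly (as probability measures on ℝ) to the Dirac measure at X(ω), as n → ∞. Then E[|X − X^n|] → 0 as n → ∞, i.e. X^n converges to X in L¹(P). -/
open MeasureTheory ProbabilityTheory Filter BoundedContinuousFunction

/-- **Lemma 9 (From C-weak convergence to convergence in L¹).** If `X` and the `X^n` all
take values in `[a, b]` a.s. and, for a.e. `ω`, the regular conditional distribution of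
`X^n` given `X`, evaluated at `X(ω)`, converges weakly to the Dirac measure at `X(ω)`,
then `E[|X − X^n|] → 0`. -/
theorem stmt_10 {Ω : Type*} [MeasurableSpace Ω] (P : Measure Ω) [IsProbabilityMeasure P]
    (a b : ℝ) (hab : a < b)
    (X : Ω → ℝ) (Xn : ℕ → Ω → ℝ) (hX : Measurable X) (hXn : ∀ n, Measurable (Xn n))
    (hXab : ∀ᵐ ω ∂P, X ω ∈ Set.Icc a b) (hXnab : ∀ n, ∀ᵐ ω ∂P, Xn n ω ∈ Set.Icc a b)
    (hweak : ∀ᵐ ω ∂P, ∀ f : BoundedContinuousFunction ℝ ℝ,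
      Tendsto (fun n => ∫ x, f x ∂(condDistrib (Xn n) X P (X ω))) atTop (nhds (f (X ω)))) :
    Tendsto (fun n => ∫ ω, |X ω - Xn n ω| ∂P) atTop (nhds 0) := by
  have hC : (0:ℝ) ≤ b - a := by linarith
  have hf_sm : StronglyMeasurable (fun p : ℝ × ℝ => |p.1 - p.2|) :=
    (measurable_fst.sub measurable_snd).abs.stronglyMeasurable
  -- integrability of |X - Xn n|
  have hbound : ∀ n, ∀ᵐ ω ∂P, |X ω - Xn n ω| ≤ b - a := by
    intro n
    filter_upwards [hXab, hXnab n] with ω h1 h2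
    rw [abs_sub_le_iff]
    constructor <;> [linarith [h1.1, h1.2, h2.1, h2.2]; linarith [h1.1, h1.2, h2.1, h2.2]]
  have hint : ∀ n, Integrable (fun ω => |X ω - Xn n ω|) P := by
    intro n
    refine Integrable.mono' (integrable_const (b - a))
      ((hX.sub (hXn n)).abs.aestronglyMeasurable) ?_
    filter_upwards [hbound n] with ω h
    rwa [Real.norm_eq_abs, abs_abs]
  -- Step A : E|X - Xn| equals the double integral against condDistrib
  have hA : ∀ n, ∫ ω, |X ω - Xn n ω| ∂P
      = ∫ ω, ∫ y, |X ω - y| ∂(condDistrib (Xn n) X P (X ω)) ∂P := by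
    intro n
    have h := condExp_prod_ae_eq_integral_condDistrib (μ := P) hX (hXn n).aemeasurable
      (f := fun p : ℝ × ℝ => |p.1 - p.2|) hf_sm (hint n)
    calc ∫ ω, |X ω - Xn n ω| ∂P
        = ∫ ω, (P[fun ω => |X ω - Xn n ω| | MeasurableSpace.comap X inferInstance]) ω ∂P :=
          (integral_condExp hX.comap_le).symm
      _ = _ := integral_congr_ae h
  -- Step B : for a.e. ω, condDistrib is supported on [a, b]
  have hsupp : ∀ n, ∀ᵐ ω ∂P, condDistrib (Xn n) X P (X ω) (Set.Icc a b) = 1 := by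
    intro n
    have h1 := condDistrib_ae_eq_condExp (μ := P) hX (hXn n)
      (measurableSet_Icc : MeasurableSet (Set.Icc a b))
    have h2 : (Xn n ⁻¹' Set.Icc a b).indicator (fun _ => (1:ℝ)) =ᵐ[P] fun _ => (1:ℝ) := by
      filter_upwards [hXnab n] with ω hω
      simp [Set.indicator_of_mem, hω]
    have h3 : P⟦Xn n ⁻¹' Set.Icc a b | MeasurableSpace.comap X inferInstance⟧
        =ᵐ[P] fun _ => (1:ℝ) :=
      (condExp_congr_ae h2).trans (Filter.EventuallyEq.of_eq (condExp_const (μ := P) hX.comap_le (1:ℝ)))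
    filter_upwards [h1, h3] with ω hω1 hω3
    have : (condDistrib (Xn n) X P (X ω) (Set.Icc a b)).toReal = 1 := by
      rw [← measureReal_def, hω1, hω3]
    exact (ENNReal.toReal_eq_one_iff _).mp this
  have hsuppae : ∀ n, ∀ᵐ ω ∂P, ∀ᵐ y ∂(condDistrib (Xn n) X P (X ω)), y ∈ Set.Icc a b := by
    intro n
    filter_upwards [hsupp n] with ω hω
    have hcompl : condDistrib (Xn n) X P (X ω) (Set.Icc a b)ᶜ = 0 := by
      rw [measure_compl measurableSet_Icc (measure_ne_top _ _), hω, measure_univ, tsub_self]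
    rw [ae_iff]
    convert hcompl using 2
    rfl
  -- Step C : pointwise a.e. convergence of the inner integrals to 0
  have hC_lim : ∀ᵐ ω ∂P, Tendsto
      (fun n => ∫ y, |X ω - y| ∂(condDistrib (Xn n) X P (X ω))) atTop (nhds 0) := by
    filter_upwards [hXab, hweak, ae_all_iff.2 hsuppae] with ω hXω hwω hsω
    -- truncated bounded continuous function
    set F : BoundedContinuousFunction ℝ ℝ :=
      BoundedContinuousFunction.ofNormedAddCommGroup (fun y => min |X ω - y| (b - a))
        (((continuous_const.sub continuous_id).abs).min continuous_const) (b - a)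
        (fun y => by
          rw [Real.norm_eq_abs, abs_of_nonneg (le_min (abs_nonneg _) hC)]
          exact min_le_right _ _) with hF
    have hFval : ∀ y, F y = min |X ω - y| (b - a) := fun y => rfl
    have hF0 : F (X ω) = 0 := by
      rw [hFval, sub_self, abs_zero, min_eq_left hC]
    have hFeq : ∀ n, ∫ y, |X ω - y| ∂(condDistrib (Xn n) X P (X ω))
        = ∫ y, F y ∂(condDistrib (Xn n) X P (X ω)) := by
      intro n
      refine integral_congr_ae ?_
      filter_upwards [hsω n] with y hy
      rw [hFval, min_eq_left]
      rw [abs_sub_le_iff]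
      constructor <;> [linarith [hXω.1, hXω.2, hy.1, hy.2]; linarith [hXω.1, hXω.2, hy.1, hy.2]]
    have := hwω F
    rw [hF0] at this
    exact this.congr (fun n => (hFeq n).symm)
  -- Step D : dominated convergence
  have hmeas : ∀ n, AEStronglyMeasurable
      (fun ω => ∫ y, |X ω - y| ∂(condDistrib (Xn n) X P (X ω))) P :=
    fun n => MeasureTheory.AEStronglyMeasurable.integral_condDistrib
      (f := fun p : ℝ × ℝ => |p.1 - p.2|) hX.aemeasurable (hXn n).aemeasurable
      hf_sm.aestronglyMeasurable
  have hDbound : ∀ n, ∀ᵐ ω ∂P,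
      ‖∫ y, |X ω - y| ∂(condDistrib (Xn n) X P (X ω))‖ ≤ b - a := by
    intro n
    filter_upwards [hXab, hsuppae n] with ω hXω hsω
    have h := norm_integral_le_of_norm_le_const (μ := condDistrib (Xn n) X P (X ω))
      (f := fun y => |X ω - y|) (C := b - a) ?_
    · simpa [measure_univ] using h
    · filter_upwards [hsω] with y hy
      rw [Real.norm_eq_abs, abs_abs, abs_sub_le_iff]
      constructor <;> [linarith [hXω.1, hXω.2, hy.1, hy.2]; linarith [hXω.1, hXω.2, hy.1, hy.2]]
  have hD := tendsto_integral_of_dominated_convergence (μ := P)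
    (F := fun n ω => ∫ y, |X ω - y| ∂(condDistrib (Xn n) X P (X ω))) (f := fun _ => (0:ℝ))
    (fun _ => b - a) hmeas (integrable_const _) hDbound hC_lim
  rw [integral_zero] at hD
  exact hD.congr (fun n => (hA n).symm)
end

section
/- Fix N ≥ 1, a set Z ⊆ ℝ, constants K_μ ≥ 0, μ_sup ≥ 0, K_INV ≥ 0, and λ ≥ 1. Let y ∈ ℝ^N, let μ : Z → ℝ^N satisfy ‖μ(x) − μ(x')‖ ≤ K_μ|x − x'| and ‖μ(x)‖ ≤ μ_sup for all x, x' ∈ Z, and let C : Z → Matrix (Fin N) (Fin N) ℝ take invertible values with spectral norm ‖C(x)^{-1}‖₂ ≤ 1/λ and ‖C(x)^{-1} − C(x')^{-1}‖₂ ≤ K_INV|x − x'| for all x, x' ∈ Z. Define q(x) := ⟨y − μ(x), C(x)^{-1}(y − μ(x))⟩. Then for all x, x' ∈ Z: |q(x) − q(x')| ≤ [ 2·K_μ·(‖y‖ + μ_sup)/λ + K_INV·(‖y‖ + μ_sup)² ] · |x − x'|. -/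
open Matrix

/-- The Euclidean norm on `ℝ^N`. -/
noncomputable def enorm {N : ℕ} (v : Fin N → ℝ) : ℝ :=
  Real.sqrt (∑ j, v j ^ 2)

/-- The spectral (operator) norm of a real `N × N` matrix: the supremum of the Euclidean
norms `‖M v‖` over vectors `v` in the Euclidean unit ball. -/
noncomputable def specNorm {N : ℕ} (M : Matrix (Fin N) (Fin N) ℝ) : ℝ :=
  ⨆ v : { v : Fin N → ℝ // _root_.enorm v ≤ 1 }, _root_.enorm (M.mulVec v)

lemma enorm_eq {N : ℕ} (v : Fin N → ℝ) :
    _root_.enorm v = ‖(WithLp.equiv 2 (Fin N → ℝ)).symm v‖ := by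
  rw [EuclideanSpace.norm_eq]
  simp [_root_.enorm, Real.norm_eq_abs, sq_abs]

lemma enorm_nonneg' {N : ℕ} (v : Fin N → ℝ) : 0 ≤ _root_.enorm v := Real.sqrt_nonneg _

lemma enorm_smul' {N : ℕ} (c : ℝ) (v : Fin N → ℝ) : _root_.enorm (c • v) = |c| * _root_.enorm v := by
  rw [enorm_eq, enorm_eq]
  have : (WithLp.equiv 2 (Fin N → ℝ)).symm (c • v) = c • (WithLp.equiv 2 (Fin N → ℝ)).symm v := rfl
  rw [this, norm_smul, Real.norm_eq_abs]

lemma enorm_add_le' {N : ℕ} (u v : Fin N → ℝ) : _root_.enorm (u + v) ≤ _root_.enorm u + _root_.enorm v := by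
  simp only [enorm_eq]
  exact norm_add_le ((WithLp.equiv 2 (Fin N → ℝ)).symm u) ((WithLp.equiv 2 (Fin N → ℝ)).symm v)

lemma enorm_neg' {N : ℕ} (v : Fin N → ℝ) : _root_.enorm (-v) = _root_.enorm v := by
  simp only [enorm_eq]
  exact norm_neg ((WithLp.equiv 2 (Fin N → ℝ)).symm v)

lemma abs_dot_le {N : ℕ} (u v : Fin N → ℝ) : |u ⬝ᵥ v| ≤ _root_.enorm u * _root_.enorm v := by
  have h : u ⬝ᵥ v = inner ℝ ((WithLp.equiv 2 (Fin N → ℝ)).symm u)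
      ((WithLp.equiv 2 (Fin N → ℝ)).symm v) := by
    simp [dotProduct, PiLp.inner_apply, mul_comm]
  rw [h, enorm_eq, enorm_eq]
  exact abs_real_inner_le_norm _ _

lemma enorm_mulVec_le {N : ℕ} (M : Matrix (Fin N) (Fin N) ℝ) (v : Fin N → ℝ) :
    _root_.enorm (M.mulVec v) ≤ specNorm M * _root_.enorm v := by
  set e := WithLp.equiv 2 (Fin N → ℝ)
  set L : EuclideanSpace ℝ (Fin N) →L[ℝ] EuclideanSpace ℝ (Fin N) :=
    LinearMap.toContinuousLinearMap (Matrix.toEuclideanLin M)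
  have hLapp : ∀ w : Fin N → ℝ, _root_.enorm (M.mulVec w) = ‖L (e.symm w)‖ := by
    intro w
    have : L (e.symm w) = e.symm (M.mulVec w) := by
      simp [L, Matrix.toEuclideanLin, e]
    rw [this, ← enorm_eq]
  have hbdd : BddAbove (Set.range fun v : { v : Fin N → ℝ // _root_.enorm v ≤ 1 } =>
      _root_.enorm (M.mulVec v)) := by
    refine ⟨‖L‖, ?_⟩
    rintro _ ⟨⟨w, hw⟩, rfl⟩
    calc _root_.enorm (M.mulVec w) = ‖L (e.symm w)‖ := hLapp w
      _ ≤ ‖L‖ * ‖e.symm w‖ := L.le_opNorm _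
      _ ≤ ‖L‖ * 1 := by
          apply mul_le_mul_of_nonneg_left _ (norm_nonneg _)
          rw [← enorm_eq]; exact hw
      _ = ‖L‖ := mul_one _
  have key : ∀ w : Fin N → ℝ, _root_.enorm w ≤ 1 → _root_.enorm (M.mulVec w) ≤ specNorm M := by
    intro w hw
    exact le_ciSup hbdd ⟨w, hw⟩
  rcases eq_or_lt_of_le (enorm_nonneg' v) with h0 | hpos
  · have hv0 : v = 0 := by
      have := enorm_eq v
      have hn : ‖e.symm v‖ = 0 := by rw [← this, ← h0]
      have := norm_eq_zero.mp hn
      simpa [e] using congrArg e this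
    subst hv0
    simp only [Matrix.mulVec_zero]
    have : _root_.enorm (0 : Fin N → ℝ) = 0 := by simp [_root_.enorm]
    rw [this, mul_zero]
  · set c := _root_.enorm v
    have hc : 0 < c := hpos
    have hu : _root_.enorm (c⁻¹ • v) ≤ 1 := by
      rw [enorm_smul', abs_of_pos (inv_pos.mpr hc)]
      rw [inv_mul_cancel₀ (ne_of_gt hc)]
    have := key _ hu
    have hrw : M.mulVec v = c • M.mulVec (c⁻¹ • v) := by
      rw [Matrix.mulVec_smul, smul_smul, mul_inv_cancel₀ (ne_of_gt hc), one_smul]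
    calc _root_.enorm (M.mulVec v) = c * _root_.enorm (M.mulVec (c⁻¹ • v)) := by
            rw [hrw, enorm_smul', abs_of_pos hc]
      _ ≤ c * specNorm M := mul_le_mul_of_nonneg_left this (le_of_lt hc)
      _ = specNorm M * c := mul_comm _ _

/-- The Lipschitz estimate for the Gaussian exponent
`q(x) = ⟨y − μ(x), C(x)⁻¹ (y − μ(x))⟩` appearing in the likelihood ratio (the bound
defining the factor `Θ(y)` in the key lemma of the paper). -/
theorem stmt_14 {N : ℕ} (hN : 1 ≤ N) (Z : Set ℝ)
    (Kmu musup KINV lam : ℝ) (hKmu : 0 ≤ Kmu) (hmusup : 0 ≤ musup)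
    (hKINV : 0 ≤ KINV) (hlam : 1 ≤ lam)
    (y : Fin N → ℝ) (mu : ℝ → Fin N → ℝ) (C : ℝ → Matrix (Fin N) (Fin N) ℝ)
    (hmuLip : ∀ x ∈ Z, ∀ x' ∈ Z, _root_.enorm (mu x - mu x') ≤ Kmu * |x - x'|)
    (hmuBdd : ∀ x ∈ Z, _root_.enorm (mu x) ≤ musup)
    (hCinv : ∀ x ∈ Z, IsUnit (C x))
    (hCinvNorm : ∀ x ∈ Z, specNorm (C x)⁻¹ ≤ 1 / lam)
    (hCinvLip : ∀ x ∈ Z, ∀ x' ∈ Z, specNorm ((C x)⁻¹ - (C x')⁻¹) ≤ KINV * |x - x'|) :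
    ∀ x ∈ Z, ∀ x' ∈ Z,
      |(y - mu x) ⬝ᵥ (C x)⁻¹.mulVec (y - mu x) -
          (y - mu x') ⬝ᵥ (C x')⁻¹.mulVec (y - mu x')| ≤
        (2 * Kmu * (_root_.enorm y + musup) / lam + KINV * (_root_.enorm y + musup) ^ 2) * |x - x'| := by
  intro x hx x' hx'
  set u : Fin N → ℝ := y - mu x with hu_def
  set u' : Fin N → ℝ := y - mu x' with hu'_def
  set A : Matrix (Fin N) (Fin N) ℝ := (C x)⁻¹ with hA_def
  set A' : Matrix (Fin N) (Fin N) ℝ := (C x')⁻¹ with hA'_def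
  set E : ℝ := _root_.enorm y + musup with hE_def
  set d : ℝ := |x - x'| with hd_def
  have hlam0 : (0 : ℝ) < lam := lt_of_lt_of_le one_pos hlam
  have hd0 : 0 ≤ d := abs_nonneg _
  have hE0 : 0 ≤ E := add_nonneg (enorm_nonneg' _) hmusup
  -- bounds on vectors
  have hu : _root_.enorm u ≤ E := by
    calc _root_.enorm u = _root_.enorm (y + -(mu x)) := by rw [hu_def]; ring_nf
      _ ≤ _root_.enorm y + _root_.enorm (-(mu x)) := enorm_add_le' _ _
      _ = _root_.enorm y + _root_.enorm (mu x) := by rw [enorm_neg']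
      _ ≤ E := by rw [hE_def]; exact add_le_add_right (hmuBdd x hx) _
  have hu' : _root_.enorm u' ≤ E := by
    calc _root_.enorm u' = _root_.enorm (y + -(mu x')) := by rw [hu'_def]; ring_nf
      _ ≤ _root_.enorm y + _root_.enorm (-(mu x')) := enorm_add_le' _ _
      _ = _root_.enorm y + _root_.enorm (mu x') := by rw [enorm_neg']
      _ ≤ E := by rw [hE_def]; exact add_le_add_right (hmuBdd x' hx') _
  have hdiff : _root_.enorm (u - u') ≤ Kmu * d := by
    have h1 : u - u' = mu x' - mu x := by rw [hu_def, hu'_def]; abel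
    rw [h1, hd_def, abs_sub_comm]
    exact hmuLip x' hx' x hx
  -- the algebraic decomposition
  have hdecomp : u ⬝ᵥ A.mulVec u - u' ⬝ᵥ A'.mulVec u' =
      (u - u') ⬝ᵥ A.mulVec u + u' ⬝ᵥ A.mulVec (u - u') + u' ⬝ᵥ (A - A').mulVec u' := by
    simp only [Matrix.sub_mulVec, Matrix.mulVec_sub, sub_dotProduct, dotProduct_sub]
    ring
  -- bound each term
  have h1 : |(u - u') ⬝ᵥ A.mulVec u| ≤ (Kmu * d) * (1 / lam * E) := by
    calc |(u - u') ⬝ᵥ A.mulVec u| ≤ _root_.enorm (u - u') * _root_.enorm (A.mulVec u) := abs_dot_le _ _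
      _ ≤ (Kmu * d) * (1 / lam * E) := by
          apply mul_le_mul hdiff _ (enorm_nonneg' _) (by positivity)
          calc _root_.enorm (A.mulVec u) ≤ specNorm A * _root_.enorm u := enorm_mulVec_le _ _
            _ ≤ 1 / lam * E :=
                mul_le_mul (hCinvNorm x hx) hu (enorm_nonneg' _) (by positivity)
  have h2 : |u' ⬝ᵥ A.mulVec (u - u')| ≤ E * (1 / lam * (Kmu * d)) := by
    calc |u' ⬝ᵥ A.mulVec (u - u')| ≤ _root_.enorm u' * _root_.enorm (A.mulVec (u - u')) := abs_dot_le _ _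
      _ ≤ E * (1 / lam * (Kmu * d)) := by
          apply mul_le_mul hu' _ (enorm_nonneg' _) hE0
          calc _root_.enorm (A.mulVec (u - u')) ≤ specNorm A * _root_.enorm (u - u') := enorm_mulVec_le _ _
            _ ≤ 1 / lam * (Kmu * d) :=
                mul_le_mul (hCinvNorm x hx) hdiff (enorm_nonneg' _) (by positivity)
  have h3 : |u' ⬝ᵥ (A - A').mulVec u'| ≤ E * ((KINV * d) * E) := by
    calc |u' ⬝ᵥ (A - A').mulVec u'| ≤ _root_.enorm u' * _root_.enorm ((A - A').mulVec u') := abs_dot_le _ _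
      _ ≤ E * ((KINV * d) * E) := by
          apply mul_le_mul hu' _ (enorm_nonneg' _) hE0
          calc _root_.enorm ((A - A').mulVec u') ≤ specNorm (A - A') * _root_.enorm u' := enorm_mulVec_le _ _
            _ ≤ (KINV * d) * E :=
                mul_le_mul (hCinvLip x hx x' hx') hu' (enorm_nonneg' _) (by positivity)
  calc |u ⬝ᵥ A.mulVec u - u' ⬝ᵥ A'.mulVec u'|
      = |(u - u') ⬝ᵥ A.mulVec u + u' ⬝ᵥ A.mulVec (u - u') + u' ⬝ᵥ (A - A').mulVec u'| := by
        rw [hdecomp]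
    _ ≤ |(u - u') ⬝ᵥ A.mulVec u + u' ⬝ᵥ A.mulVec (u - u')| + |u' ⬝ᵥ (A - A').mulVec u'| :=
        abs_add_le _ _
    _ ≤ (|(u - u') ⬝ᵥ A.mulVec u| + |u' ⬝ᵥ A.mulVec (u - u')|) + |u' ⬝ᵥ (A - A').mulVec u'| :=
        add_le_add_left (abs_add_le _ _) _
    _ ≤ ((Kmu * d) * (1 / lam * E) + E * (1 / lam * (Kmu * d))) + E * ((KINV * d) * E) := by
        exact add_le_add (add_le_add h1 h2) h3
    _ = (2 * Kmu * E / lam + KINV * E ^ 2) * d := by ring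
end

section
/- Fix N ≥ 1, t ∈ ℕ, and λ > 1. Let A_0, …, A_t and B_0, …, B_t be real symmetric positive definite N×N matrices all of whose eigenvalues are at least λ. Then | ∏_{i=0}^{t} det(A_i)^{−1/2} − ∏_{i=0}^{t} det(B_i)^{−1/2} | ≤ (1 / (2·λ^{N(t+2)/2})) · ∑_{i=0}^{t} | det(A_i) − det(B_i) |. -/
open Matrix Finset

private lemma det_ge_of_sub_posSemidef {N : ℕ} {lam : ℝ} (hlam : 0 < lam)
    {M : Matrix (Fin N) (Fin N) ℝ} (hM : M.PosDef)
    (h : (M - lam • (1 : Matrix (Fin N) (Fin N) ℝ)).PosSemidef) :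
    lam ^ N ≤ M.det := by
  have hH := hM.isHermitian
  have heig : ∀ i, lam ≤ hH.eigenvalues i := by
    intro i
    set v := hH.eigenvectorBasis i with hv
    have h1 : (0:ℝ) ≤ dotProduct (star ⇑v) ((M - lam • 1) *ᵥ ⇑v) := h.dotProduct_mulVec_nonneg _
    have hvv : dotProduct (star ⇑v) ⇑v = 1 := by
      have hn := hH.eigenvectorBasis.orthonormal.1 i
      have h2 := EuclideanSpace.inner_eq_star_dotProduct (𝕜 := ℝ) v v
      rw [real_inner_self_eq_norm_sq, hn] at h2
      simpa using h2.symm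
    have h2 : hH.eigenvalues i = dotProduct (star ⇑v) (M *ᵥ ⇑v) := by
      simpa using hH.eigenvalues_eq i
    have h3 : (0:ℝ) ≤ dotProduct (star ⇑v) (M *ᵥ ⇑v) - lam := by
      rw [sub_mulVec, dotProduct_sub, smul_mulVec, one_mulVec, dotProduct_smul,
        smul_eq_mul, hvv, mul_one] at h1
      exact h1
    linarith
  have hdet : M.det = ∏ i, hH.eigenvalues i := by
    simpa using hH.det_eq_prod_eigenvalues
  rw [hdet]
  calc lam ^ N = ∏ _i : Fin N, lam := by simp
    _ ≤ ∏ i, hH.eigenvalues i :=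
      Finset.prod_le_prod (fun _ _ => hlam.le) (fun i _ => heig i)

private lemma prod_sub_prod_abs_le {ι : Type*} (s : Finset ι) (f g : ι → ℝ) (c : ℝ)
    (hf : ∀ i ∈ s, f i ∈ Set.Icc 0 c) (hg : ∀ i ∈ s, g i ∈ Set.Icc 0 c) :
    c * |∏ i ∈ s, f i - ∏ i ∈ s, g i| ≤ c ^ s.card * ∑ i ∈ s, |f i - g i| := by
  induction s using Finset.cons_induction with
  | empty => simp
  | cons a s ha ih =>
    obtain ⟨hfa0, hfac⟩ := hf a (Finset.mem_cons_self a s)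
    have hc0 : 0 ≤ c := hfa0.trans hfac
    have hf' : ∀ i ∈ s, f i ∈ Set.Icc 0 c := fun i hi => hf i (Finset.mem_cons.2 (Or.inr hi))
    have hg' : ∀ i ∈ s, g i ∈ Set.Icc 0 c := fun i hi => hg i (Finset.mem_cons.2 (Or.inr hi))
    have hg0 : 0 ≤ ∏ i ∈ s, g i := Finset.prod_nonneg fun i hi => (hg' i hi).1
    have hgc : ∏ i ∈ s, g i ≤ c ^ s.card := by
      calc ∏ i ∈ s, g i ≤ ∏ _i ∈ s, c :=
            Finset.prod_le_prod (fun i hi => (hg' i hi).1) (fun i hi => (hg' i hi).2)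
        _ = c ^ s.card := Finset.prod_const c
    have IH := ih hf' hg'
    rw [Finset.prod_cons, Finset.prod_cons, Finset.sum_cons, Finset.card_cons]
    have h1 : |f a * ∏ i ∈ s, f i - g a * ∏ i ∈ s, g i|
        ≤ |f a - g a| * ∏ i ∈ s, g i + f a * |∏ i ∈ s, f i - ∏ i ∈ s, g i| := by
      have key : f a * ∏ i ∈ s, f i - g a * ∏ i ∈ s, g i
          = (f a - g a) * ∏ i ∈ s, g i + f a * (∏ i ∈ s, f i - ∏ i ∈ s, g i) := by ring
      rw [key]
      refine (abs_add_le _ _).trans ?_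
      rw [abs_mul, abs_mul, abs_of_nonneg hg0, abs_of_nonneg hfa0]
    calc c * |f a * ∏ i ∈ s, f i - g a * ∏ i ∈ s, g i|
        ≤ c * (|f a - g a| * ∏ i ∈ s, g i
            + f a * |∏ i ∈ s, f i - ∏ i ∈ s, g i|) := mul_le_mul_of_nonneg_left h1 hc0
      _ = |f a - g a| * (c * ∏ i ∈ s, g i)
            + f a * (c * |∏ i ∈ s, f i - ∏ i ∈ s, g i|) := by ring
      _ ≤ |f a - g a| * (c * c ^ s.card)
            + c * (c ^ s.card * ∑ i ∈ s, |f i - g i|) := by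
          refine add_le_add (mul_le_mul_of_nonneg_left
            (mul_le_mul_of_nonneg_left hgc hc0) (abs_nonneg _)) ?_
          exact mul_le_mul hfac IH (mul_nonneg hc0 (abs_nonneg _)) hc0
      _ = c ^ (s.card + 1) * (|f a - g a| + ∑ i ∈ s, |f i - g i|) := by ring

private lemma rpow_neg_half_eq {x : ℝ} (hx : 0 < x) :
    x ^ (-(1:ℝ)/2) = (Real.sqrt x)⁻¹ := by
  rw [Real.sqrt_eq_rpow, ← Real.rpow_neg hx.le]
  norm_num

private lemma abs_rpow_neg_half_sub {m x y : ℝ} (hm : 0 < m) (hx : m ^ 2 ≤ x) (hy : m ^ 2 ≤ y) :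
    |x ^ (-(1:ℝ)/2) - y ^ (-(1:ℝ)/2)| ≤ |x - y| / (2 * m ^ 3) := by
  have hx0 : 0 < x := lt_of_lt_of_le (by positivity) hx
  have hy0 : 0 < y := lt_of_lt_of_le (by positivity) hy
  set u := Real.sqrt x with hudef
  set v := Real.sqrt y with hvdef
  have hu : m ≤ u := (Real.le_sqrt hm.le hx0.le).2 hx
  have hv : m ≤ v := (Real.le_sqrt hm.le hy0.le).2 hy
  have hu0 : 0 < u := lt_of_lt_of_le hm hu
  have hv0 : 0 < v := lt_of_lt_of_le hm hv
  have hu2 : u * u = x := Real.mul_self_sqrt hx0.le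
  have hv2 : v * v = y := Real.mul_self_sqrt hy0.le
  have hpos : 0 < u * v * (u + v) := by positivity
  have e1 : (u⁻¹ - v⁻¹) * (u * v * (u + v)) = y - x := by
    field_simp
    nlinarith [hu2, hv2]
  have habs : |u⁻¹ - v⁻¹| = |x - y| / (u * v * (u + v)) := by
    rw [eq_div_iff (ne_of_gt hpos), ← abs_of_pos hpos, ← abs_mul, e1, abs_sub_comm]
  rw [rpow_neg_half_eq hx0, rpow_neg_half_eq hy0, ← hudef, ← hvdef, habs]
  have h3 : m * m ≤ u * v := mul_le_mul hu hv hm.le hu0.le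
  have h4 : 2 * m ≤ u + v := by linarith
  have h5 : 2 * m ^ 3 ≤ u * v * (u + v) := by nlinarith [mul_le_mul h3 h4 (by positivity) (by positivity)]
  exact div_le_div_of_nonneg_left (abs_nonneg _) (by positivity) h5

/-- The determinant part of the likelihood-ratio difference bound in the key lemma:
for symmetric positive definite matrices with all eigenvalues at least `λ > 1`,
`|∏ det(A_i)^{−1/2} − ∏ det(B_i)^{−1/2}| ≤ (2·λ^{N(t+2)/2})⁻¹ ∑ |det A_i − det B_i|`. -/
theorem stmt_15 {N : ℕ} (hN : 1 ≤ N) (t : ℕ) (lam : ℝ) (hlam : 1 < lam)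
    (A B : Fin (t + 1) → Matrix (Fin N) (Fin N) ℝ)
    (hA : ∀ i, (A i).PosDef) (hB : ∀ i, (B i).PosDef)
    (hAeig : ∀ i, (A i - lam • (1 : Matrix (Fin N) (Fin N) ℝ)).PosSemidef)
    (hBeig : ∀ i, (B i - lam • (1 : Matrix (Fin N) (Fin N) ℝ)).PosSemidef) :
    |(∏ i, (A i).det ^ (-(1 : ℝ) / 2)) - ∏ i, (B i).det ^ (-(1 : ℝ) / 2)| ≤
      (1 / (2 * lam ^ (((N : ℝ) * (t + 2)) / 2))) * ∑ i, |(A i).det - (B i).det| := by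
  have hlam0 : (0:ℝ) < lam := lt_trans one_pos hlam
  have hN0 : (0:ℝ) < (N:ℝ) := by exact_mod_cast Nat.pos_of_ne_zero (by omega)
  set m : ℝ := lam ^ ((N:ℝ)/2) with hmdef
  have hm1 : 1 < m := Real.one_lt_rpow_iff_of_pos hlam0 |>.2 (Or.inl ⟨hlam, by positivity⟩)
  have hm0 : 0 < m := lt_trans one_pos hm1
  have hm2 : m ^ 2 = lam ^ N := by
    rw [hmdef, ← Real.rpow_natCast (lam ^ ((N:ℝ)/2)) 2, ← Real.rpow_mul hlam0.le,
      ← Real.rpow_natCast lam N]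
    norm_num
  have hm3 : lam ^ (((N : ℝ) * ((t:ℝ) + 2)) / 2) = m ^ (t + 2) := by
    rw [hmdef, ← Real.rpow_natCast (lam ^ ((N:ℝ)/2)) (t + 2), ← Real.rpow_mul hlam0.le]
    congr 1
    push_cast
    ring
  have hdA : ∀ i, m ^ 2 ≤ (A i).det := fun i =>
    hm2 ▸ det_ge_of_sub_posSemidef hlam0 (hA i) (hAeig i)
  have hdB : ∀ i, m ^ 2 ≤ (B i).det := fun i =>
    hm2 ▸ det_ge_of_sub_posSemidef hlam0 (hB i) (hBeig i)
  have hmem : ∀ (x : ℝ), m ^ 2 ≤ x → x ^ (-(1:ℝ)/2) ∈ Set.Icc 0 m⁻¹ := by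
    intro x hx
    have hx0 : 0 < x := lt_of_lt_of_le (by positivity) hx
    rw [rpow_neg_half_eq hx0]
    have hs : m ≤ Real.sqrt x := (Real.le_sqrt hm0.le hx0.le).2 hx
    exact ⟨by positivity, inv_anti₀ hm0 hs⟩
  have key := prod_sub_prod_abs_le Finset.univ
      (fun i => (A i).det ^ (-(1:ℝ)/2)) (fun i => (B i).det ^ (-(1:ℝ)/2)) m⁻¹
      (fun i _ => hmem _ (hdA i)) (fun i _ => hmem _ (hdB i))
  rw [Finset.card_univ, Fintype.card_fin] at key
  have step1 : |(∏ i, (A i).det ^ (-(1 : ℝ) / 2)) - ∏ i, (B i).det ^ (-(1 : ℝ) / 2)|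
      ≤ m⁻¹ ^ t * ∑ i, |(A i).det ^ (-(1:ℝ)/2) - (B i).det ^ (-(1:ℝ)/2)| := by
    refine le_of_mul_le_mul_left ?_ (inv_pos.2 hm0)
    calc m⁻¹ * |(∏ i, (A i).det ^ (-(1 : ℝ) / 2)) - ∏ i, (B i).det ^ (-(1 : ℝ) / 2)|
        ≤ m⁻¹ ^ (t + 1) * ∑ i, |(A i).det ^ (-(1:ℝ)/2) - (B i).det ^ (-(1:ℝ)/2)| := key
      _ = m⁻¹ * (m⁻¹ ^ t * ∑ i, |(A i).det ^ (-(1:ℝ)/2) - (B i).det ^ (-(1:ℝ)/2)|) := by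
          ring
  have step2 : ∑ i, |(A i).det ^ (-(1:ℝ)/2) - (B i).det ^ (-(1:ℝ)/2)|
      ≤ ∑ i, |(A i).det - (B i).det| / (2 * m ^ 3) :=
    Finset.sum_le_sum fun i _ => abs_rpow_neg_half_sub hm0 (hdA i) (hdB i)
  have hsum0 : 0 ≤ ∑ i, |(A i).det - (B i).det| :=
    Finset.sum_nonneg fun i _ => abs_nonneg _
  calc |(∏ i, (A i).det ^ (-(1 : ℝ) / 2)) - ∏ i, (B i).det ^ (-(1 : ℝ) / 2)|
      ≤ m⁻¹ ^ t * ∑ i, |(A i).det ^ (-(1:ℝ)/2) - (B i).det ^ (-(1:ℝ)/2)| := step1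
    _ ≤ m⁻¹ ^ t * ∑ i, |(A i).det - (B i).det| / (2 * m ^ 3) :=
        mul_le_mul_of_nonneg_left step2 (by positivity)
    _ = (1 / (2 * m ^ (t + 3))) * ∑ i, |(A i).det - (B i).det| := by
        rw [← Finset.sum_div, inv_pow, inv_mul_eq_div, div_div, one_div_mul_eq_div]
        congr 1
        ring
    _ ≤ (1 / (2 * m ^ (t + 2))) * ∑ i, |(A i).det - (B i).det| := by
        refine mul_le_mul_of_nonneg_right ?_ hsum0
        apply div_le_div_of_nonneg_left one_pos.le (by positivity)
        have : m ^ (t + 2) ≤ m ^ (t + 3) := pow_le_pow_right₀ hm1.le (by omega)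
        linarith
    _ = (1 / (2 * lam ^ (((N : ℝ) * ((t:ℝ) + 2)) / 2))) * ∑ i, |(A i).det - (B i).det| := by
        rw [hm3]
end

section
/- Let (Ω, F, Q) be a probability space, G ⊆ F a sub-σ-algebra, and δ ≥ 0. Let X, X' : Ω → ℝ satisfy |X| ≤ δ and |X'| ≤ δ almost surely, and let Λ, Λ' : Ω → ℝ satisfy Λ ≥ 0, 0 < Λ' ≤ 1 almost surely, with Λ, Λ', XΛ and X'Λ' integrable and E[Λ | G] > 0 and E[Λ' | G] > 0 almost everywhere. Then, Q-almost everywhere: | E[XΛ | G]/E[Λ | G] − E[X'Λ' | G]/E[Λ' | G] | ≤ ( 2δ·E[|Λ − Λ'| | G] + E[|X − X'| | G] ) / E[Λ' | G]. -/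
open MeasureTheory

private lemma ptwise (δ a b c d p q : ℝ) (hδ : 0 ≤ δ) (hb : 0 < b) (hd : 0 < d)
    (hp : 0 ≤ p) (_hq : 0 ≤ q)
    (h1 : |a| ≤ δ * b) (h2 : |b - d| ≤ p) (h3 : |a - c| ≤ δ * p + q) :
    |a / b - c / d| ≤ (2 * δ * p + q) / d := by
  have key : a / b - c / d = (a * (d - b) + (a - c) * b) / (b * d) := by
    field_simp; ring
  rw [key, abs_div, abs_of_pos (mul_pos hb hd), div_le_div_iff₀ (mul_pos hb hd) hd]
  have habs : |a * (d - b) + (a - c) * b| ≤ δ * b * p + (δ * p + q) * b := by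
    calc |a * (d - b) + (a - c) * b| ≤ |a * (d - b)| + |(a - c) * b| := abs_add_le _ _
      _ = |a| * |b - d| + |a - c| * b := by
          rw [abs_mul, abs_mul, abs_sub_comm d b, abs_of_pos hb]
      _ ≤ (δ * b) * p + (δ * p + q) * b := by
          gcongr <;> first | exact abs_nonneg _ | assumption
  nlinarith [mul_pos hb hd, mul_nonneg hδ hp]

private lemma condexp_abs_le {Ω : Type*} {F : MeasurableSpace Ω} {Q : Measure Ω}
    [IsProbabilityMeasure Q] {G : MeasurableSpace Ω} {f g : Ω → ℝ}
    (hf : Integrable f Q) (hg : Integrable g Q) (h : ∀ᵐ ω ∂Q, |f ω| ≤ g ω) :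
    ∀ᵐ ω ∂Q, |(Q[f | G]) ω| ≤ (Q[g | G]) ω := by
  have h1 : f ≤ᵐ[Q] g := h.mono fun ω hω => (abs_le.mp hω).2
  have h2 : (-g) ≤ᵐ[Q] f := h.mono fun ω hω => by
    have := (abs_le.mp hω).1; simpa using this
  have A := condExp_mono (m := G) hf hg h1
  have B := condExp_mono (m := G) hg.neg hf h2
  have C := condExp_neg (m := G) (μ := Q) g
  filter_upwards [A, B, C] with ω hA hB hC
  rw [abs_le]
  constructor
  · have : (-(Q[g|G])) ω ≤ (Q[f|G]) ω := by rw [← hC]; exact hB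
    simpa using this
  · exact hA

/-- **Abstract filter-perturbation inequality** (final step of the proof of Theorem 3):
the difference between two conditional-expectation ratios of Kallianpur–Striebel form is
controlled by the conditional L¹ distances of the likelihoods and the integrands, divided
by the conditional expectation of the approximate likelihood. -/
theorem stmt_16 {Ω : Type*} {F : MeasurableSpace Ω} (Q : Measure Ω)
    [IsProbabilityMeasure Q] (G : MeasurableSpace Ω) (hG : G ≤ F) (δ : ℝ) (hδ : 0 ≤ δ)
    (X X' Λ Λ' : Ω → ℝ)
    (hX : ∀ᵐ ω ∂Q, |X ω| ≤ δ) (hX' : ∀ᵐ ω ∂Q, |X' ω| ≤ δ)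
    (hΛ : ∀ᵐ ω ∂Q, 0 ≤ Λ ω) (hΛ' : ∀ᵐ ω ∂Q, 0 < Λ' ω ∧ Λ' ω ≤ 1)
    (hXint : Integrable X Q) (hX'int : Integrable X' Q)
    (hΛint : Integrable Λ Q) (hΛ'int : Integrable Λ' Q)
    (hXΛint : Integrable (fun ω => X ω * Λ ω) Q)
    (hX'Λ'int : Integrable (fun ω => X' ω * Λ' ω) Q)
    (hpos : ∀ᵐ ω ∂Q, 0 < (Q[Λ | G]) ω) (hpos' : ∀ᵐ ω ∂Q, 0 < (Q[Λ' | G]) ω) :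
    ∀ᵐ ω ∂Q,
      |(Q[fun ω' => X ω' * Λ ω' | G]) ω / (Q[Λ | G]) ω -
          (Q[fun ω' => X' ω' * Λ' ω' | G]) ω / (Q[Λ' | G]) ω| ≤
        (2 * δ * (Q[fun ω' => |Λ ω' - Λ' ω'| | G]) ω +
            (Q[fun ω' => |X ω' - X' ω'| | G]) ω) / (Q[Λ' | G]) ω := by
  have hΛΛ'int : Integrable (fun ω => |Λ ω - Λ' ω|) Q := (hΛint.sub hΛ'int).abs
  have hXX'int : Integrable (fun ω => |X ω - X' ω|) Q := (hXint.sub hX'int).abs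
  -- (1) |E[XΛ|G]| ≤ δ E[Λ|G]
  have bound1 : ∀ᵐ ω ∂Q, |(Q[fun ω' => X ω' * Λ ω' | G]) ω| ≤ δ * (Q[Λ | G]) ω := by
    have h : ∀ᵐ ω ∂Q, |X ω * Λ ω| ≤ (fun ω => δ * Λ ω) ω := by
      filter_upwards [hX, hΛ] with ω h1 h2
      rw [abs_mul, abs_of_nonneg h2]
      exact mul_le_mul_of_nonneg_right h1 h2
    have hb := condexp_abs_le (G := G) hXΛint (hΛint.const_mul δ) h
    have hsmul : Q[fun ω => δ * Λ ω | G] =ᵐ[Q] fun ω => δ * (Q[Λ | G]) ω := by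
      have h' := condExp_smul (m := G) (μ := Q) δ Λ
      filter_upwards [h'] with ω hω
      exact hω
    filter_upwards [hb, hsmul] with ω hω hs
    rw [hs] at hω; exact hω
  -- (2) |E[Λ|G] - E[Λ'|G]| ≤ E[|Λ-Λ'||G]
  have bound2 : ∀ᵐ ω ∂Q,
      |(Q[Λ | G]) ω - (Q[Λ' | G]) ω| ≤ (Q[fun ω' => |Λ ω' - Λ' ω'| | G]) ω := by
    have h : ∀ᵐ ω ∂Q, |(Λ - Λ') ω| ≤ (fun ω => |Λ ω - Λ' ω|) ω :=
      Filter.Eventually.of_forall fun ω => le_refl _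
    have hb := condexp_abs_le (G := G) (hΛint.sub hΛ'int) hΛΛ'int h
    have hsub := condExp_sub (m := G) hΛint hΛ'int
    filter_upwards [hb, hsub] with ω h1 h2
    rw [h2] at h1; simpa using h1
  -- (3) |E[XΛ|G] - E[X'Λ'|G]| ≤ δ E[|Λ-Λ'||G] + E[|X-X'||G]
  have bound3 : ∀ᵐ ω ∂Q,
      |(Q[fun ω' => X ω' * Λ ω' | G]) ω - (Q[fun ω' => X' ω' * Λ' ω' | G]) ω| ≤
        δ * (Q[fun ω' => |Λ ω' - Λ' ω'| | G]) ω +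
          (Q[fun ω' => |X ω' - X' ω'| | G]) ω := by
    have h : ∀ᵐ ω ∂Q, |((fun ω => X ω * Λ ω) - fun ω => X' ω * Λ' ω) ω| ≤
        (fun ω => δ * |Λ ω - Λ' ω| + |X ω - X' ω|) ω := by
      filter_upwards [hX, hΛ'] with ω h1 h2
      have key : X ω * Λ ω - X' ω * Λ' ω = X ω * (Λ ω - Λ' ω) + (X ω - X' ω) * Λ' ω := by
        ring
      simp only [Pi.sub_apply]
      rw [key]
      calc |X ω * (Λ ω - Λ' ω) + (X ω - X' ω) * Λ' ω|
          ≤ |X ω * (Λ ω - Λ' ω)| + |(X ω - X' ω) * Λ' ω| := abs_add_le _ _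
        _ = |X ω| * |Λ ω - Λ' ω| + |X ω - X' ω| * |Λ' ω| := by rw [abs_mul, abs_mul]
        _ ≤ δ * |Λ ω - Λ' ω| + |X ω - X' ω| * 1 := by
            gcongr <;> first
              | exact abs_nonneg _
              | exact h1
              | (rw [abs_of_pos h2.1]; exact h2.2)
        _ = δ * |Λ ω - Λ' ω| + |X ω - X' ω| := by ring
    have hgint : Integrable (fun ω => δ * |Λ ω - Λ' ω| + |X ω - X' ω|) Q :=
      (hΛΛ'int.const_mul δ).add hXX'int
    have hb := condexp_abs_le (G := G) (hXΛint.sub hX'Λ'int) hgint h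
    have hadd := condExp_add (m := G) (hΛΛ'int.const_mul δ) hXX'int
    have hsmul : Q[fun ω => δ * |Λ ω - Λ' ω| | G]
        =ᵐ[Q] fun ω => δ * (Q[fun ω' => |Λ ω' - Λ' ω'| | G]) ω := by
      have h' := condExp_smul (m := G) (μ := Q) δ (fun ω => |Λ ω - Λ' ω|)
      filter_upwards [h'] with ω hω
      exact hω
    have hsub := condExp_sub (m := G) hXΛint hX'Λ'int
    filter_upwards [hb, hadd, hsub, hsmul] with ω h1 h2 h3 h4
    rw [h3] at h1
    simp only [Pi.sub_apply] at h1
    calc |(Q[fun ω' => X ω' * Λ ω' | G]) ω - (Q[fun ω' => X' ω' * Λ' ω' | G]) ω|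
        ≤ (Q[fun ω => δ * |Λ ω - Λ' ω| + |X ω - X' ω| | G]) ω := h1
      _ = (Q[fun ω => δ * |Λ ω - Λ' ω| | G]) ω + (Q[fun ω' => |X ω' - X' ω'| | G]) ω := by
          have : (fun ω => δ * |Λ ω - Λ' ω| + |X ω - X' ω|)
              = (fun ω => δ * |Λ ω - Λ' ω|) + fun ω => |X ω - X' ω| := rfl
          rw [this, h2]; rfl
      _ = δ * (Q[fun ω' => |Λ ω' - Λ' ω'| | G]) ω + (Q[fun ω' => |X ω' - X' ω'| | G]) ω := by
          rw [h4]
  have hpnn : ∀ᵐ ω ∂Q, 0 ≤ (Q[fun ω' => |Λ ω' - Λ' ω'| | G]) ω :=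
    condExp_nonneg (m := G) (Filter.Eventually.of_forall fun ω => abs_nonneg _)
  have hqnn : ∀ᵐ ω ∂Q, 0 ≤ (Q[fun ω' => |X ω' - X' ω'| | G]) ω :=
    condExp_nonneg (m := G) (Filter.Eventually.of_forall fun ω => abs_nonneg _)
  filter_upwards [bound1, bound2, bound3, hpos, hpos', hpnn, hqnn] with ω h1 h2 h3 hb hd hp hq
  exact ptwise δ _ _ _ _ _ _ hδ hb hd hp hq h1 h2 h3
end
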